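/- For goods with copies and additive valuations, every EFL_WC exclusive allocation guarantees each agent at least a 1/3 fraction of her maximin share: v_i(A_i) ≥ (1/3)·MMS_i for every agent i. -/

import Mathlib

open Finset

variable {τ : Type*} [Fintype τ] [DecidableEq τ]

def IsAlloc (n : ℕ) (k : τ → ℕ) (A : Fin n → Finset τ) : Prop :=
  ∀ t, (Finset.univ.filter fun i => t ∈ A i).card = k t

def vOf (v : τ → ℝ) (S : Finset τ) : ℝ := ∑ t ∈ S, v t

def EFLwc {n : ℕ} (v : Fin n → τ → ℝ) (A : Fin n → Finset τ) : Prop :=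
  ∀ i j, (A j \ A i).card ≤ 1 ∨
    ∃ g ∈ A j \ A i,
      vOf (v i) ((A j \ A i).erase g) ≤ vOf (v i) (A i \ A j) ∧
      v i g ≤ vOf (v i) (A i \ A j)

noncomputable def MMS (n : ℕ) (k : τ → ℕ) (v : τ → ℝ) : ℝ :=
  ⨆ B : {B : Fin n → Finset τ // IsAlloc n k B}, ⨅ j, vOf v (B.1 j)

lemma vOf_nonneg (v : τ → ℝ) (hv : ∀ t, 0 ≤ v t) (S : Finset τ) : 0 ≤ vOf v S :=
  Finset.sum_nonneg fun t _ => hv t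

lemma vOf_mono (v : τ → ℝ) (hv : ∀ t, 0 ≤ v t) {S T : Finset τ} (h : S ⊆ T) :
    vOf v S ≤ vOf v T :=
  Finset.sum_le_sum_of_subset_of_nonneg h fun t _ _ => hv t

lemma inter_eq_filter (C G : Finset τ) : C ∩ G = G.filter (fun t => t ∈ C) := by
  ext t; simp [and_comm]

lemma double_count_card {n : ℕ} (G : Finset τ) (C : Fin n → Finset τ) :
    ∑ l, (C l ∩ G).card = ∑ t ∈ G, (univ.filter fun l => t ∈ C l).card := by
  have h1 : ∀ l, (C l ∩ G).card = ∑ t ∈ G, if t ∈ C l then 1 else 0 := by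
    intro l
    rw [inter_eq_filter, Finset.card_filter]
  simp_rw [h1]
  rw [Finset.sum_comm]
  refine Finset.sum_congr rfl fun t _ => ?_
  rw [Finset.card_filter]

lemma double_count_val {n : ℕ} (w : τ → ℝ) (G : Finset τ) (C : Fin n → Finset τ) :
    ∑ l, (∑ t ∈ C l ∩ G, w t)
      = ∑ t ∈ G, ((univ.filter fun l => t ∈ C l).card : ℝ) * w t := by
  have h1 : ∀ l, (∑ t ∈ C l ∩ G, w t) = ∑ t ∈ G, if t ∈ C l then w t else 0 := by
    intro l
    rw [inter_eq_filter, Finset.sum_filter]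
  simp_rw [h1]
  rw [Finset.sum_comm]
  refine Finset.sum_congr rfl fun t _ => ?_
  rw [← Finset.sum_filter, Finset.sum_const, nsmul_eq_mul]

lemma min_le_three_mul {n : ℕ} {k : τ → ℕ} {v : Fin n → τ → ℝ} {A : Fin n → Finset τ}
    (hv : ∀ i t, 0 ≤ v i t) (hA : IsAlloc n k A) (hefl : EFLwc v A) (i : Fin n)
    {B : Fin n → Finset τ} (hB : IsAlloc n k B) :
    (⨅ j, vOf (v i) (B j)) ≤ 3 * vOf (v i) (A i) := by
  set a : ℝ := vOf (v i) (A i) with ha_def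
  have ha : 0 ≤ a := vOf_nonneg _ (hv i) _
  set m : ℝ := ⨅ j, vOf (v i) (B j) with hm_def
  by_contra hcon
  push_neg at hcon
  have hma : a < m := by linarith
  have hm_le : ∀ l, m ≤ vOf (v i) (B l) := fun l =>
    ciInf_le (Finite.bddBelow_range _) l
  classical
  set Big : Finset τ := univ.filter (fun t => t ∉ A i ∧ a < v i t) with hBig_def
  set SmallOut : Finset τ := univ.filter (fun t => t ∉ A i ∧ ¬ a < v i t) with hSO_def
  set S : Finset (Fin n) := univ.filter (fun j => (A j ∩ Big).Nonempty) with hS_def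
  set C : Finset (Fin n) := univ.filter (fun l => (B l ∩ Big).Nonempty) with hC_def
  -- F1
  have F1 : ∀ j ∈ S, (A j \ A i) ⊆ Big ∧ (A j \ A i).card ≤ 1 := by
    intro j hj
    rw [hS_def, mem_filter] at hj
    obtain ⟨t, ht⟩ := hj.2
    rw [mem_inter] at ht
    obtain ⟨htA, htB⟩ := ht
    rw [hBig_def, mem_filter] at htB
    obtain ⟨-, htAi, htbig⟩ := htB
    have htdiff : t ∈ A j \ A i := mem_sdiff.mpr ⟨htA, htAi⟩
    rcases hefl i j with hcard | ⟨g, hg, h1, h2⟩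
    · constructor
      · intro u hu
        have hut : u = t := Finset.card_le_one.mp hcard u hu t htdiff
        subst hut
        rw [hBig_def, mem_filter]
        exact ⟨mem_univ u, htAi, htbig⟩
      · exact hcard
    · exfalso
      have hAiAj : vOf (v i) (A i \ A j) ≤ a :=
        vOf_mono _ (hv i) (sdiff_subset)
      by_cases hteq : t = g
      · subst hteq; linarith
      · have hte : t ∈ (A j \ A i).erase g := mem_erase.mpr ⟨hteq, htdiff⟩
        have := Finset.single_le_sum (f := v i) (fun u _ => hv i u) hte
        have : v i t ≤ vOf (v i) ((A j \ A i).erase g) := this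
        linarith
  -- F2
  have F2 : ∀ j ∉ S, vOf (v i) (A j \ A i) ≤ 2 * a := by
    intro j hj
    rcases hefl i j with hcard | ⟨g, hg, h1, h2⟩
    · rcases Finset.eq_empty_or_nonempty (A j \ A i) with he | hne
      · rw [he]
        simp [vOf]
        linarith
      · have hcard1 : (A j \ A i).card = 1 := le_antisymm hcard hne.card_pos
        obtain ⟨t, hteq⟩ := Finset.card_eq_one.mp hcard1
        have htmem : t ∈ A j \ A i := by rw [hteq]; exact mem_singleton_self t
        have htAj : t ∈ A j := (mem_sdiff.mp htmem).1
        have htAi : t ∉ A i := (mem_sdiff.mp htmem).2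
        have htnb : t ∉ Big := by
          intro hb
          apply hj
          rw [hS_def, mem_filter]
          exact ⟨mem_univ j, ⟨t, mem_inter.mpr ⟨htAj, hb⟩⟩⟩
        have htsmall : ¬ a < v i t := by
          intro hlt
          exact htnb (by rw [hBig_def, mem_filter]; exact ⟨mem_univ t, htAi, hlt⟩)
        push_neg at htsmall
        rw [hteq]
        simp [vOf]
        linarith
    · have hAiAj : vOf (v i) (A i \ A j) ≤ a :=
        vOf_mono _ (hv i) (sdiff_subset)
      have hsum : vOf (v i) ((A j \ A i).erase g) + v i g = vOf (v i) (A j \ A i) :=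
        Finset.sum_erase_add _ _ hg
      linarith
  -- counting big copies
  have hcount1 : ∑ t ∈ Big, (univ.filter fun l => t ∈ B l).card
      = ∑ t ∈ Big, (univ.filter fun l => t ∈ A l).card := by
    refine Finset.sum_congr rfl fun t _ => ?_
    rw [hB t, hA t]
  have hAcount : ∑ l, (A l ∩ Big).card ≤ S.card := by
    have hz : ∀ l ∈ (univ : Finset (Fin n)), l ∉ S → (A l ∩ Big).card = 0 := by
      intro l _ hl
      rw [Finset.card_eq_zero]
      rw [hS_def, mem_filter] at hl
      push_neg at hl
      exact hl (mem_univ l)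
    rw [← Finset.sum_subset (Finset.subset_univ S) hz]
    calc ∑ l ∈ S, (A l ∩ Big).card ≤ ∑ l ∈ S, 1 := by
          refine Finset.sum_le_sum fun l hl => ?_
          have hsub : A l ∩ Big ⊆ A l \ A i := by
            intro t ht
            rw [mem_inter] at ht
            rw [hBig_def, mem_filter] at ht
            exact mem_sdiff.mpr ⟨ht.1, ht.2.2.1⟩
          exact le_trans (Finset.card_le_card hsub) (F1 l hl).2
      _ = S.card := by rw [Finset.sum_const, smul_eq_mul, mul_one]
  have hCcard : C.card ≤ S.card := by
    have h1 : C.card ≤ ∑ l, (B l ∩ Big).card := by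
      calc C.card = ∑ l ∈ C, 1 := by rw [Finset.sum_const, smul_eq_mul, mul_one]
        _ ≤ ∑ l ∈ C, (B l ∩ Big).card := by
            refine Finset.sum_le_sum fun l hl => ?_
            rw [hC_def, mem_filter] at hl
            exact hl.2.card_pos
        _ ≤ ∑ l, (B l ∩ Big).card :=
            Finset.sum_le_sum_of_subset (Finset.subset_univ C)
    calc C.card ≤ ∑ l, (B l ∩ Big).card := h1
      _ = ∑ t ∈ Big, (univ.filter fun l => t ∈ B l).card := double_count_card _ _
      _ = ∑ t ∈ Big, (univ.filter fun l => t ∈ A l).card := hcount1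
      _ = ∑ l, (A l ∩ Big).card := (double_count_card _ _).symm
      _ ≤ S.card := hAcount
  -- i not in S
  have hiS : i ∉ S := by
    rw [hS_def, mem_filter]
    rintro ⟨-, t, ht⟩
    rw [mem_inter] at ht
    rw [hBig_def, mem_filter] at ht
    exact ht.2.2.1 ht.1
  have hScard : S.card ≤ n - 1 := by
    have : S ⊆ univ.erase i := by
      intro j hj
      exact mem_erase.mpr ⟨fun h => hiS (h ▸ hj), mem_univ j⟩
    calc S.card ≤ (univ.erase i).card := Finset.card_le_card this
      _ = n - 1 := by rw [Finset.card_erase_of_mem (mem_univ i), Finset.card_univ,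
            Fintype.card_fin]
  have hn1 : 1 ≤ n := i.pos
  have hnS : 1 ≤ n - S.card := by omega
  -- Q : total small-outside mass
  set Q : ℝ := ∑ t ∈ SmallOut, ((univ.filter fun l => t ∈ A l).card : ℝ) * v i t
    with hQ_def
  -- Q upper bound
  have hQA : Q = ∑ l, vOf (v i) (A l ∩ SmallOut) := by
    rw [hQ_def, ← double_count_val]
    rfl
  have hQupper : Q ≤ ((n - S.card : ℕ) : ℝ) * (2 * a) := by
    rw [hQA]
    have hz : ∀ l ∈ (univ : Finset (Fin n)), l ∉ univ \ S →
        vOf (v i) (A l ∩ SmallOut) = 0 := by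
      intro l _ hl
      have hlS : l ∈ S := by
        by_contra h
        exact hl (mem_sdiff.mpr ⟨mem_univ l, h⟩)
      have : A l ∩ SmallOut = ∅ := by
        rw [Finset.eq_empty_iff_forall_notMem]
        intro t ht
        rw [mem_inter] at ht
        have htSO := ht.2
        rw [hSO_def, mem_filter] at htSO
        have htd : t ∈ A l \ A i := mem_sdiff.mpr ⟨ht.1, htSO.2.1⟩
        have htbig : t ∈ Big := (F1 l hlS).1 htd
        rw [hBig_def, mem_filter] at htbig
        exact htSO.2.2 htbig.2.2
      rw [this]
      simp [vOf]
    rw [← Finset.sum_subset (Finset.subset_univ (univ \ S)) hz]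
    calc ∑ l ∈ univ \ S, vOf (v i) (A l ∩ SmallOut)
        ≤ ∑ l ∈ univ \ S, 2 * a := by
          refine Finset.sum_le_sum fun l hl => ?_
          have hlS : l ∉ S := (mem_sdiff.mp hl).2
          have hsub : A l ∩ SmallOut ⊆ A l \ A i := by
            intro t ht
            rw [mem_inter] at ht
            have htSO := ht.2
            rw [hSO_def, mem_filter] at htSO
            exact mem_sdiff.mpr ⟨ht.1, htSO.2.1⟩
          exact le_trans (vOf_mono _ (hv i) hsub) (F2 l hlS)
      _ = ((univ \ S).card : ℝ) * (2 * a) := by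
          rw [Finset.sum_const, nsmul_eq_mul]
      _ = ((n - S.card : ℕ) : ℝ) * (2 * a) := by
          rw [Finset.card_sdiff_of_subset (Finset.subset_univ S), Finset.card_univ,
            Fintype.card_fin]
  -- Q lower bound
  have hQB : Q = ∑ l, vOf (v i) (B l ∩ SmallOut) := by
    rw [hQ_def]
    have : ∀ t ∈ SmallOut, ((univ.filter fun l => t ∈ A l).card : ℝ) * v i t
        = ((univ.filter fun l => t ∈ B l).card : ℝ) * v i t := by
      intro t _
      rw [hA t, hB t]
    rw [Finset.sum_congr rfl this, ← double_count_val]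
    rfl
  have hQlower : ((n - S.card : ℕ) : ℝ) * (m - a) ≤ Q := by
    have hFcard : n - S.card ≤ (univ \ C).card := by
      rw [Finset.card_sdiff_of_subset (Finset.subset_univ C), Finset.card_univ, Fintype.card_fin]
      omega
    have hper : ∀ l ∈ univ \ C, m - a ≤ vOf (v i) (B l ∩ SmallOut) := by
      intro l hl
      have hlC : l ∉ C := (mem_sdiff.mp hl).2
      have hBlBig : B l ∩ Big = ∅ := by
        rw [hC_def, mem_filter] at hlC
        push_neg at hlC
        exact hlC (mem_univ l)
      have hsub : B l \ A i ⊆ B l ∩ SmallOut := by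
        intro t ht
        rw [mem_sdiff] at ht
        have htnb : t ∉ Big := by
          intro hb
          have : t ∈ B l ∩ Big := mem_inter.mpr ⟨ht.1, hb⟩
          rw [hBlBig] at this
          exact absurd this (Finset.notMem_empty t)
        have htsm : ¬ a < v i t := fun hlt =>
          htnb (by rw [hBig_def, mem_filter]; exact ⟨mem_univ t, ht.2, hlt⟩)
        refine mem_inter.mpr ⟨ht.1, ?_⟩
        rw [hSO_def, mem_filter]
        exact ⟨mem_univ t, ht.2, htsm⟩
      have hsplit : vOf (v i) (B l ∩ A i) + vOf (v i) (B l \ A i) = vOf (v i) (B l) :=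
        Finset.sum_inter_add_sum_sdiff _ _ _
      have h1 : vOf (v i) (B l ∩ A i) ≤ a :=
        vOf_mono _ (hv i) Finset.inter_subset_right
      have h2 : vOf (v i) (B l \ A i) ≤ vOf (v i) (B l ∩ SmallOut) :=
        vOf_mono _ (hv i) hsub
      have h3 : m ≤ vOf (v i) (B l) := hm_le l
      linarith
    calc ((n - S.card : ℕ) : ℝ) * (m - a)
        ≤ ((univ \ C).card : ℝ) * (m - a) := by
          have : ((n - S.card : ℕ) : ℝ) ≤ ((univ \ C).card : ℝ) := by
            exact_mod_cast hFcard
          have hma' : 0 ≤ m - a := by linarith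
          exact mul_le_mul_of_nonneg_right this hma'
      _ = (univ \ C).card • (m - a) := by rw [nsmul_eq_mul]
      _ ≤ ∑ l ∈ univ \ C, vOf (v i) (B l ∩ SmallOut) :=
          Finset.card_nsmul_le_sum _ _ _ hper
      _ ≤ ∑ l, vOf (v i) (B l ∩ SmallOut) := by
          refine Finset.sum_le_sum_of_subset_of_nonneg (Finset.subset_univ _) ?_
          intro l _ _
          exact vOf_nonneg _ (hv i) _
      _ = Q := hQB.symm
  -- conclude
  have hp : (1 : ℝ) ≤ ((n - S.card : ℕ) : ℝ) := by exact_mod_cast hnS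
  have hchain : ((n - S.card : ℕ) : ℝ) * (m - a) ≤ ((n - S.card : ℕ) : ℝ) * (2 * a) :=
    le_trans hQlower hQupper
  have hkey : m - a ≤ 2 * a :=
    le_of_mul_le_mul_left hchain (by linarith)
  linarith

/-- Every EFL_WC exclusive allocation of goods with copies
guarantees each agent at least 1/3 of her maximin share. -/
theorem eflwc_mms_bound {n : ℕ} {k : τ → ℕ} {v : Fin n → τ → ℝ}
    {A : Fin n → Finset τ} (hv : ∀ i t, 0 ≤ v i t)
    (hA : IsAlloc n k A) (hefl : EFLwc v A) :
    ∀ i, (1 / 3) * MMS n k (v i) ≤ vOf (v i) (A i) := by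
  intro i
  have ha : 0 ≤ vOf (v i) (A i) := vOf_nonneg _ (hv i) _
  have hMMS : MMS n k (v i) ≤ 3 * vOf (v i) (A i) := by
    rw [MMS]
    rcases isEmpty_or_nonempty {B : Fin n → Finset τ // IsAlloc n k B} with he | hne
    · rw [Real.iSup_of_isEmpty]
      linarith
    · exact ciSup_le fun B => min_le_three_mul hv hA hefl i B.2
  linarith
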